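/- For any symmetric positive definite d×d matrices Σ̂ and Σ₀, the inner product ⟨Σ̂ - Σ₀, Â - A₀⟩ ≥ 0, where Â = -2 tr(Σ̂⁻¹)^{-1/2} Σ̂⁻² and A₀ = -2 tr(Σ₀⁻¹)^{-1/2} Σ₀⁻², with equality if and only if tr(Σ̂⁻¹) = tr(Σ₀⁻¹) and both Cauchy–Schwarz inequalities tr(Σ̂⁻¹Σ₀Σ̂⁻¹) ≥ tr(Σ̂⁻¹)²/tr(Σ₀⁻¹), tr(Σ₀⁻¹Σ̂Σ₀⁻¹) ≥ tr(Σ₀⁻¹)²/tr(Σ̂⁻¹) are tight. -/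

import Mathlib

open Matrix

lemma trace_cs {d : ℕ} (A B : Matrix (Fin d) (Fin d) ℝ) :
    ((Aᵀ * B).trace) ^ 2 ≤ (Aᵀ * A).trace * (Bᵀ * B).trace := by
  have h : ∀ C D : Matrix (Fin d) (Fin d) ℝ,
      (Cᵀ * D).trace = ∑ p : Fin d × Fin d, C p.1 p.2 * D p.1 p.2 := by
    intro C D
    rw [Fintype.sum_prod_type]
    simp only [Matrix.trace, Matrix.diag, Matrix.mul_apply, Matrix.transpose_apply]
    exact Finset.sum_comm
  rw [h, h, h]
  simpa [sq] using Finset.sum_mul_sq_le_sq_mul_sq Finset.univ (fun p : Fin d × Fin d => A p.1 p.2) (fun p : Fin d × Fin d => B p.1 p.2)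

lemma trace_pos' {d : ℕ} (hd : 0 < d) {M : Matrix (Fin d) (Fin d) ℝ} (hM : M.PosDef) :
    0 < M.trace := by
  have : ∀ i, 0 < M i i := by
    intro i
    have hne : (Pi.single i 1 : Fin d → ℝ) ≠ 0 := by
      intro h
      have := congrFun h i
      simp at this
    have := hM.dotProduct_mulVec_pos hne
    simpa [dotProduct, mulVec, Pi.single_apply, Finset.mul_sum] using this
  have : 0 < ∑ i, M i i :=
    Finset.sum_pos (fun i _ => this i) ⟨⟨0, hd⟩, Finset.mem_univ _⟩
  simpa [Matrix.trace, Matrix.diag] using this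

open scoped MatrixOrder in
lemma key_cs {d : ℕ} {S P : Matrix (Fin d) (Fin d) ℝ} (hS : S.PosDef) (hP : P.IsSymm) :
    P.trace ^ 2 ≤ (S⁻¹).trace * (P * S * P).trace := by
  set R := CFC.sqrt S with hR
  have hRR : R * R = S := CFC.sqrt_mul_sqrt_self S hS.posSemidef.nonneg
  have hRsym : Rᵀ = R := (CFC.sqrt_nonneg S).posSemidef.1
  have hRdet : IsUnit R.det := by
    have hmul : R.det * R.det = S.det := by rw [← Matrix.det_mul, hRR]
    have hSdet : IsUnit S.det := (Matrix.isUnit_iff_isUnit_det S).mp hS.isUnit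
    exact isUnit_of_mul_isUnit_left (hmul ▸ hSdet)
  have h1 : (R⁻¹)ᵀ * (R * P) = P := by
    rw [Matrix.transpose_nonsing_inv, hRsym, ← Matrix.mul_assoc, Matrix.nonsing_inv_mul R hRdet, Matrix.one_mul]
  have h2 : (R⁻¹)ᵀ * R⁻¹ = S⁻¹ := by
    rw [Matrix.transpose_nonsing_inv, hRsym, ← Matrix.mul_inv_rev, hRR]
  have h3 : (R * P)ᵀ * (R * P) = P * S * P := by
    rw [Matrix.transpose_mul, hP, hRsym, ← hRR]
    simp [Matrix.mul_assoc]
  have := trace_cs (R⁻¹) (R * P)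
  rw [h1, h2, h3] at this
  exact this

set_option maxHeartbeats 1000000 in
lemma helper {d : ℕ} (hd : 0 < d) (Shat S0 : Matrix (Fin d) (Fin d) ℝ)
    (h1 : Shat.PosDef) (h1s : Shat.IsSymm) (h2 : S0.PosDef) (h2s : S0.IsSymm) :
    ((Shat - S0)ᵀ * ((-2 / Real.sqrt ((Shat⁻¹).trace)) • (Shat⁻¹ * Shat⁻¹)
        - (-2 / Real.sqrt ((S0⁻¹).trace)) • (S0⁻¹ * S0⁻¹))).trace ≥ 0 ∧
      (((Shat - S0)ᵀ * ((-2 / Real.sqrt ((Shat⁻¹).trace)) • (Shat⁻¹ * Shat⁻¹)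
          - (-2 / Real.sqrt ((S0⁻¹).trace)) • (S0⁻¹ * S0⁻¹))).trace = 0 ↔
        ((Shat⁻¹).trace = (S0⁻¹).trace ∧
          (Shat⁻¹ * S0 * Shat⁻¹).trace = ((Shat⁻¹).trace) ^ 2 / (S0⁻¹).trace ∧
          (S0⁻¹ * Shat * S0⁻¹).trace = ((S0⁻¹).trace) ^ 2 / (Shat⁻¹).trace)) := by
  have hdet1 : IsUnit Shat.det := (Matrix.isUnit_iff_isUnit_det _).mp h1.isUnit
  have hdet2 : IsUnit S0.det := (Matrix.isUnit_iff_isUnit_det _).mp h2.isUnit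
  have hPsym : (Shat⁻¹).IsSymm := by rw [Matrix.IsSymm, Matrix.transpose_nonsing_inv, h1s]
  have hQsym : (S0⁻¹).IsSymm := by rw [Matrix.IsSymm, Matrix.transpose_nonsing_inv, h2s]
  set a := (Shat⁻¹).trace with ha'
  set b := (S0⁻¹).trace with hb'
  set x := (Shat⁻¹ * S0 * Shat⁻¹).trace with hx'
  set y := (S0⁻¹ * Shat * S0⁻¹).trace with hy'
  have ha : 0 < a := trace_pos' hd h1.inv
  have hb : 0 < b := trace_pos' hd h2.inv
  set u := Real.sqrt a with hu'
  set v := Real.sqrt b with hv'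
  have hu : 0 < u := Real.sqrt_pos.mpr ha
  have hv : 0 < v := Real.sqrt_pos.mpr hb
  have ha2 : a = u ^ 2 := (Real.sq_sqrt ha.le).symm
  have hb2 : b = v ^ 2 := (Real.sq_sqrt hb.le).symm
  -- key Cauchy-Schwarz inequalities
  have hxineq : a ^ 2 ≤ b * x := key_cs h2 hPsym
  have hyineq : b ^ 2 ≤ a * y := key_cs h1 hQsym
  -- trace computations
  have e1 : (Shat * ((-2 / u) • (Shat⁻¹ * Shat⁻¹))).trace = (-2 / u) * a := by
    rw [Matrix.mul_smul, Matrix.trace_smul, ← Matrix.mul_assoc,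
      Matrix.mul_nonsing_inv _ hdet1, Matrix.one_mul, smul_eq_mul]
  have e4 : (S0 * ((-2 / v) • (S0⁻¹ * S0⁻¹))).trace = (-2 / v) * b := by
    rw [Matrix.mul_smul, Matrix.trace_smul, ← Matrix.mul_assoc,
      Matrix.mul_nonsing_inv _ hdet2, Matrix.one_mul, smul_eq_mul]
  have e2 : (Shat * ((-2 / v) • (S0⁻¹ * S0⁻¹))).trace = (-2 / v) * y := by
    rw [Matrix.mul_smul, Matrix.trace_smul, ← Matrix.mul_assoc,
      Matrix.trace_mul_cycle, smul_eq_mul]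
  have e3 : (S0 * ((-2 / u) • (Shat⁻¹ * Shat⁻¹))).trace = (-2 / u) * x := by
    rw [Matrix.mul_smul, Matrix.trace_smul, ← Matrix.mul_assoc,
      Matrix.trace_mul_cycle, smul_eq_mul]
  have hT : ((Shat - S0)ᵀ * ((-2 / u) • (Shat⁻¹ * Shat⁻¹)
      - (-2 / v) • (S0⁻¹ * S0⁻¹))).trace
      = (-2 / u) * a - (-2 / v) * y - ((-2 / u) * x - (-2 / v) * b) := by
    rw [Matrix.transpose_sub, h1s, h2s, Matrix.sub_mul, Matrix.mul_sub, Matrix.mul_sub,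
      Matrix.trace_sub, Matrix.trace_sub, Matrix.trace_sub, e1, e2, e3, e4]
  -- decomposition into three nonnegative summands
  have hdecomp : (-2 / u) * a - (-2 / v) * y - ((-2 / u) * x - (-2 / v) * b)
      = 2 / u * (x - a ^ 2 / b) + 2 / v * (y - b ^ 2 / a)
        + 2 * ((u ^ 2 - v ^ 2) * (u ^ 3 - v ^ 3)) / (u ^ 2 * v ^ 2) := by
    rw [ha2, hb2]; field_simp; ring
  have ht1 : 0 ≤ 2 / u * (x - a ^ 2 / b) := by
    have : a ^ 2 / b ≤ x := (div_le_iff₀' hb).mpr hxineq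
    have h2u : 0 ≤ 2 / u := by positivity
    nlinarith
  have ht2 : 0 ≤ 2 / v * (y - b ^ 2 / a) := by
    have : b ^ 2 / a ≤ y := (div_le_iff₀' ha).mpr hyineq
    have h2v : 0 ≤ 2 / v := by positivity
    nlinarith
  have hfac : (u ^ 2 - v ^ 2) * (u ^ 3 - v ^ 3)
      = (u - v) ^ 2 * ((u + v) * (u ^ 2 + u * v + v ^ 2)) := by ring
  have hposfac : 0 < (u + v) * (u ^ 2 + u * v + v ^ 2) := by positivity
  have ht3 : 0 ≤ 2 * ((u ^ 2 - v ^ 2) * (u ^ 3 - v ^ 3)) / (u ^ 2 * v ^ 2) := by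
    rw [hfac]; positivity
  constructor
  · rw [hT, hdecomp]; linarith
  · rw [hT, hdecomp]
    constructor
    · intro h0
      have hz1 : 2 / u * (x - a ^ 2 / b) = 0 := by linarith
      have hz2 : 2 / v * (y - b ^ 2 / a) = 0 := by linarith
      have hz3 : 2 * ((u ^ 2 - v ^ 2) * (u ^ 3 - v ^ 3)) / (u ^ 2 * v ^ 2) = 0 := by linarith
      have hxeq : x = a ^ 2 / b := by
        have h2u : (2 : ℝ) / u ≠ 0 := by positivity
        have := mul_eq_zero.mp hz1
        rcases this with h | h
        · exact absurd h h2u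
        · linarith
      have hyeq : y = b ^ 2 / a := by
        have h2v : (2 : ℝ) / v ≠ 0 := by positivity
        rcases mul_eq_zero.mp hz2 with h | h
        · exact absurd h h2v
        · linarith
      have huv : u = v := by
        have hden : (u ^ 2 * v ^ 2 : ℝ) ≠ 0 := by positivity
        have : (u ^ 2 - v ^ 2) * (u ^ 3 - v ^ 3) = 0 := by
          rcases div_eq_zero_iff.mp hz3 with h | h
          · linarith
          · exact absurd h hden
        rw [hfac] at this
        rcases mul_eq_zero.mp this with h | h
        · have := pow_eq_zero_iff (n := 2) (by norm_num) |>.mp h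
          linarith [sub_eq_zero.mp this]
        · exact absurd h hposfac.ne'
      exact ⟨by rw [ha2, hb2, huv], hxeq, hyeq⟩
    · rintro ⟨hab, hxeq, hyeq⟩
      have huv : u = v := by rw [hu', hv', hab]
      rw [hxeq, hyeq, huv, hab]
      ring

theorem inner_diff_nonneg {d : ℕ} (Shat S0 : Matrix (Fin d) (Fin d) ℝ)
    (h1 : Shat.PosDef) (h1s : Shat.IsSymm) (h2 : S0.PosDef) (h2s : S0.IsSymm) :
    letI Ahat : Matrix (Fin d) (Fin d) ℝ :=
      (-2 / Real.sqrt ((Shat⁻¹).trace)) • (Shat⁻¹ * Shat⁻¹)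
    letI A0 : Matrix (Fin d) (Fin d) ℝ :=
      (-2 / Real.sqrt ((S0⁻¹).trace)) • (S0⁻¹ * S0⁻¹)
    ((Shat - S0)ᵀ * (Ahat - A0)).trace ≥ 0 ∧
      (((Shat - S0)ᵀ * (Ahat - A0)).trace = 0 ↔
        ((Shat⁻¹).trace = (S0⁻¹).trace ∧
          (Shat⁻¹ * S0 * Shat⁻¹).trace = ((Shat⁻¹).trace) ^ 2 / (S0⁻¹).trace ∧
          (S0⁻¹ * Shat * S0⁻¹).trace = ((S0⁻¹).trace) ^ 2 / (Shat⁻¹).trace)) := by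
  rcases Nat.eq_zero_or_pos d with hd | hd
  · subst hd
    simp [Matrix.trace]
  · exact helper hd Shat S0 h1 h1s h2 h2s
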